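/- Let X be a set, d a pseudometric on X, γ : [0,1] → X a map continuous with respect to d, and r : [0,1] → ℝ a function with r(t) > 0 for every t ∈ [0,1]. Then for every partition Σ of [0,1] there exists a refinement Σ' = {0 = t'_0 ≤ t'_1 ≤ ... ≤ t'_m = 1} of Σ (i.e. every point of Σ appears among the t'_j) such that d(γ(t'_j), γ(t'_{j+1})) < max{r(t'_j), r(t'_{j+1})} for every j ∈ {0, ..., m−1}. -/

import Mathlib

open unitInterval ENNReal Topology

/-- A pseudometric on a set `X`. -/
structure PseudoMetricOn (X : Type*) where
  d : X → X → ℝ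
  refl : ∀ x, d x x = 0
  symm : ∀ x y, d x y = d y x
  nonneg : ∀ x y, 0 ≤ d x y
  triangle : ∀ x y z, d x z ≤ d x y + d y z

/-- A partition `0 = t₀ ≤ t₁ ≤ ... ≤ tₙ = 1` of `[0,1]`. -/
structure UnitIntervalPartition where
  n : ℕ
  t : Fin (n + 1) → I
  mono : Monotone t
  first : t 0 = 0
  last : t (Fin.last n) = 1

/-- The sum `∑ d(γ(tᵢ), γ(tᵢ₊₁))` associated to a partition. -/
noncomputable def pathSum {X : Type*} (d : PseudoMetricOn X) (γ : I → X)
    (P : UnitIntervalPartition) : ℝ :=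
  ∑ i : Fin P.n, d.d (γ (P.t i.castSucc)) (γ (P.t i.succ))

/-- The length of `γ` induced by the pseudometric `d`. -/
noncomputable def pathLength {X : Type*} (d : PseudoMetricOn X) (γ : I → X) : ℝ≥0∞ :=
  ⨆ P : UnitIntervalPartition, ENNReal.ofReal (pathSum d γ P)

/-- The topology on `X` induced by a pseudometric. -/
noncomputable def pmTopology {X : Type*} (d : PseudoMetricOn X) : TopologicalSpace X :=
  (UniformSpace.ofDist d.d d.refl d.symm d.triangle).toTopologicalSpace

/-- `γ : [0,1] → X` is continuous w.r.t. the pseudometric `ρ`. -/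
def IsAdmissible {X : Type*} (ρ : PseudoMetricOn X) (γ : I → X) : Prop :=
  Continuous[inferInstance, pmTopology ρ] γ

/-- The intrinsic pseudometric induced by `d`, with admissible paths the `ρ`-continuous ones. -/
noncomputable def intrinsicDist {X : Type*} (d ρ : PseudoMetricOn X) (x y : X) : ℝ≥0∞ :=
  ⨅ (γ : I → X) (_ : IsAdmissible ρ γ ∧ γ 0 = x ∧ γ 1 = y), pathLength d γ

/-- The relation linking consecutive points of the refinement. -/
def chainRel {X : Type*} (d : PseudoMetricOn X) (γ : I → X) (r : I → ℝ) (x y : I) : Prop :=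
  x ≤ y ∧ d.d (γ x) (γ y) < max (r x) (r y)

open Uniformity in
/-- Metric-style continuity of an admissible path. -/
lemma admissible_cont {X : Type*} (d : PseudoMetricOn X) (γ : I → X) (hγ : IsAdmissible d γ)
    (t : I) (ε : ℝ) (hε : 0 < ε) :
    ∃ δ > 0, ∀ s : I, dist s t < δ → d.d (γ t) (γ s) < ε := by
  letI U : UniformSpace X := UniformSpace.ofDist d.d d.refl d.symm d.triangle
  have hb := UniformSpace.hasBasis_ofFun (exists_gt (0:ℝ)) d.d d.refl d.symm d.triangle
      UniformSpace.ofDist_aux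
  have hball : {y | d.d (γ t) y < ε} ∈ @nhds X (pmTopology d) (γ t) := by
    have : @nhds X (pmTopology d) (γ t) = Filter.comap (Prod.mk (γ t)) (𝓤 X) :=
      nhds_eq_comap_uniformity
    rw [this]
    exact Filter.mem_comap.2 ⟨{p : X × X | d.d p.1 p.2 < ε}, hb.mem_of_mem hε, fun y hy => hy⟩
  have h2 : γ ⁻¹' {y | d.d (γ t) y < ε} ∈ 𝓝 t := (hγ.tendsto t) hball
  rcases Metric.mem_nhds_iff.1 h2 with ⟨δ, hδ, hsub⟩
  exact ⟨δ, hδ, fun s hs => hsub (by simpa [Metric.mem_ball] using hs)⟩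

/-- Between any `a ≤ b` in `I` there is a chain for `chainRel`. -/
lemma exists_chain {X : Type*} (d : PseudoMetricOn X) (γ : I → X) (r : I → ℝ)
    (hr : ∀ t : I, 0 < r t)
    (hc : ∀ t : I, ∃ δ > 0, ∀ s : I, dist s t < δ → d.d (γ t) (γ s) < r t)
    (a b : I) (hab : a ≤ b) :
    ∃ l : List I, l.Chain' (chainRel d γ r) ∧ l.head? = some a ∧ l.getLast? = some b := by
  set R := chainRel d γ r with hR
  set S : Set ℝ := {x | ∃ u : I, (u:ℝ) = x ∧ a ≤ u ∧ u ≤ b ∧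
      ∃ l : List I, l.Chain' R ∧ l.head? = some a ∧ l.getLast? = some u} with hS
  have haS : (a:ℝ) ∈ S := ⟨a, rfl, le_refl a, hab, [a], List.isChain_singleton a, rfl, rfl⟩
  have hub : ∀ x ∈ S, x ≤ (b:ℝ) := by rintro x ⟨u, rfl, _, hub', _⟩; exact hub'
  have hbdd : BddAbove S := ⟨b, hub⟩
  have hne : S.Nonempty := ⟨a, haS⟩
  set c := sSup S with hc_def
  have hac : (a:ℝ) ≤ c := le_csSup hbdd haS
  have hcb : c ≤ (b:ℝ) := csSup_le hne hub
  have hcI : c ∈ Set.Icc (0:ℝ) 1 := ⟨le_trans a.2.1 hac, le_trans hcb b.2.2⟩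
  set cI : I := ⟨c, hcI⟩ with hcI_def
  obtain ⟨δ, hδ, hball⟩ := hc cI
  obtain ⟨x, hxS, hx⟩ := exists_lt_of_lt_csSup hne (show c - δ < c by linarith)
  obtain ⟨u, rfl, hau, hub', l, hl, hhead, hlast⟩ := hxS
  have hxc : (u:ℝ) ≤ c := le_csSup hbdd ⟨u, rfl, hau, hub', l, hl, hhead, hlast⟩
  have hdist : dist u cI < δ := by
    rw [Subtype.dist_eq, Real.dist_eq, abs_lt]
    constructor <;> simp [hcI_def] <;> linarith
  have hchain_c : ∃ l : List I, l.Chain' R ∧ l.head? = some a ∧ l.getLast? = some cI := by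
    refine ⟨l ++ [cI], ?_, ?_, by simp⟩
    · rw [show List.Chain' _ _ = List.IsChain _ _ from rfl, List.isChain_append]
      refine ⟨hl, List.isChain_singleton _, ?_⟩
      intro x hx' y hy'
      rw [hlast] at hx'
      simp only [Option.mem_some_iff] at hx'
      simp only [List.head?_cons, Option.mem_some_iff] at hy'
      subst hx'; subst hy'
      refine ⟨hxc, ?_⟩
      rw [d.symm]
      exact lt_of_lt_of_le (hball u hdist) (le_max_right _ _)
    · cases l with
      | nil => simp at hhead
      | cons z t => simpa using hhead
  have hcb' : c = (b:ℝ) := by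
    by_contra hne'
    have hclt : c < (b:ℝ) := lt_of_le_of_ne hcb hne'
    set y := min (b:ℝ) (c + δ/2) with hy_def
    have hcy : c < y := lt_min hclt (by linarith)
    have hyb : y ≤ (b:ℝ) := min_le_left _ _
    have hyδ : y - c < δ := by
      have : y ≤ c + δ/2 := min_le_right _ _
      linarith
    have hyI : y ∈ Set.Icc (0:ℝ) 1 := ⟨le_trans hcI.1 (le_of_lt hcy), le_trans hyb b.2.2⟩
    set yI : I := ⟨y, hyI⟩ with hyI_def
    have hdist2 : dist yI cI < δ := by
      rw [Subtype.dist_eq, Real.dist_eq, abs_lt]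
      constructor <;> simp [hcI_def, hyI_def] <;> linarith
    obtain ⟨l2, hl2, hh2, hlast2⟩ := hchain_c
    have hyS : y ∈ S := by
      refine ⟨yI, rfl, ?_, hyb, l2 ++ [yI], ?_, ?_, by simp⟩
      · exact Subtype.coe_le_coe.1 (le_trans hac hcy.le)
      · rw [show List.Chain' _ _ = List.IsChain _ _ from rfl, List.isChain_append]
        refine ⟨hl2, List.isChain_singleton _, ?_⟩
        intro x hx' y' hy'
        rw [hlast2] at hx'
        simp only [Option.mem_some_iff] at hx'
        simp only [List.head?_cons, Option.mem_some_iff] at hy'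
        subst hx'; subst hy'
        refine ⟨?_, lt_of_lt_of_le (hball yI hdist2) (le_max_left _ _)⟩
        exact Subtype.coe_le_coe.1 (by exact hcy.le)
      · cases l2 with
        | nil => simp at hh2
        | cons z t => simpa using hh2
    have := le_csSup hbdd hyS
    linarith
  obtain ⟨l2, hl2, hh2, hlast2⟩ := hchain_c
  have hcb'' : cI = b := Subtype.ext hcb'
  exact ⟨l2, hl2, hh2, hcb'' ▸ hlast2⟩

/-- Glue two chains. -/
lemma chain_glue {α : Type*} {R : α → α → Prop} {a b c : α} {l₁ l₂ : List α}
    (h₁ : l₁.Chain' R) (hh₁ : l₁.head? = some a) (hl₁ : l₁.getLast? = some b)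
    (h₂ : l₂.Chain' R) (hh₂ : l₂.head? = some b) (hl₂ : l₂.getLast? = some c) :
    ∃ l : List α, l.Chain' R ∧ l.head? = some a ∧ l.getLast? = some c ∧
      ∀ x, (x ∈ l₁ ∨ x ∈ l₂) → x ∈ l := by
  cases l₂ with
  | nil => simp at hh₂
  | cons v t =>
    have hvb : b = v := by simpa using hh₂.symm
    subst hvb
    obtain ⟨hlink, ht⟩ := List.isChain_cons.1 h₂
    have hbl₁ : b ∈ l₁ := by
      obtain ⟨h, heq⟩ := List.mem_getLast?_eq_getLast (by rw [hl₁]; rfl)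
      exact heq ▸ List.getLast_mem h
    refine ⟨l₁ ++ t, ?_, ?_, ?_, ?_⟩
    · rw [show List.Chain' _ _ = List.IsChain _ _ from rfl, List.isChain_append]
      refine ⟨h₁, ht, ?_⟩
      intro x hx' y hy'
      rw [hl₁] at hx'
      simp only [Option.mem_some_iff] at hx'
      subst hx'
      exact hlink y hy'
    · cases l₁ with
      | nil => simp at hh₁
      | cons z s => simpa using hh₁
    · cases t with
      | nil =>
        simp only [List.append_nil]
        rw [hl₁]
        simpa using hl₂
      | cons w s =>
        rw [List.getLast?_append_of_ne_nil _ (by simp)]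
        simpa using hl₂
    · intro x hx'
      rcases hx' with hx' | hx'
      · exact List.mem_append_left _ hx'
      · rcases List.mem_cons.1 hx' with rfl | hx'
        · exact List.mem_append_left _ hbl₁
        · exact List.mem_append_right _ hx'

theorem exists_refinement_of_continuous {X : Type*} (d : PseudoMetricOn X) (γ : I → X)
    (hγ : IsAdmissible d γ) (r : I → ℝ) (hr : ∀ t : I, 0 < r t) (P : UnitIntervalPartition) :
    ∃ P' : UnitIntervalPartition, (∀ i : Fin (P.n + 1), ∃ j : Fin (P'.n + 1), P'.t j = P.t i) ∧
      ∀ j : Fin P'.n, d.d (γ (P'.t j.castSucc)) (γ (P'.t j.succ))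
        < max (r (P'.t j.castSucc)) (r (P'.t j.succ)) := by
  have hc : ∀ t : I, ∃ δ > 0, ∀ s : I, dist s t < δ → d.d (γ t) (γ s) < r t :=
    fun t => admissible_cont d γ hγ t (r t) (hr t)
  -- chains over initial segments of the partition
  have claim : ∀ k (hk : k ≤ P.n), ∃ l : List I, l.Chain' (chainRel d γ r) ∧
      l.head? = some (P.t 0) ∧ l.getLast? = some (P.t ⟨k, by omega⟩) ∧
      ∀ i : ℕ, ∀ _hi : i ≤ k, P.t ⟨i, by omega⟩ ∈ l := by
    intro k
    induction k with
    | zero =>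
      intro _
      refine ⟨[P.t 0], List.isChain_singleton _, rfl, rfl, ?_⟩
      intro i hi
      interval_cases i
      simp
    | succ k ih =>
      intro hk
      obtain ⟨l₁, hl₁, hh₁, hlast₁, hmem₁⟩ := ih (by omega)
      obtain ⟨l₂, hl₂, hh₂, hlast₂⟩ := exists_chain d γ r hr hc
        (P.t ⟨k, by omega⟩) (P.t ⟨k+1, by omega⟩) (P.mono (by simp [Fin.mk_le_mk]))
      obtain ⟨l, hl, hh, hlast, hmem⟩ := chain_glue hl₁ hh₁ hlast₁ hl₂ hh₂ hlast₂
      refine ⟨l, hl, hh, hlast, ?_⟩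
      intro i hi
      rcases Nat.lt_or_ge i (k+1) with hik | hik
      · exact hmem _ (Or.inl (hmem₁ i (by omega)))
      · have hieq : i = k + 1 := by omega
        subst hieq
        refine hmem _ (Or.inr ?_)
        obtain ⟨h, heq⟩ := List.mem_getLast?_eq_getLast (x := P.t ⟨k+1, by omega⟩)
          (by rw [hlast₂]; rfl)
        exact heq ▸ List.getLast_mem h
  obtain ⟨L, hL, hLhead, hLlast, hLmem⟩ := claim P.n le_rfl
  have hLne : L ≠ [] := by intro h; simp [h] at hLhead
  set n' := L.length - 1 with hn'
  have hlen : n' + 1 = L.length := Nat.succ_pred_eq_of_pos (List.length_pos_iff.2 hLne)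
  have hsorted : L.Pairwise (· ≤ ·) :=
    List.isChain_iff_pairwise.1 (hL.imp fun a b hab => hab.1)
  refine ⟨⟨n', fun j => L.get (Fin.cast hlen j), ?_, ?_, ?_⟩, ?_, ?_⟩
  · intro i j hij
    exact hsorted.rel_get_of_le hij
  · -- first
    show L.get (Fin.cast hlen 0) = 0
    rw [show (0 : I) = P.t 0 from P.first.symm]
    cases L with
    | nil => exact absurd rfl hLne
    | cons z T =>
      have hz : z = P.t 0 := by simpa using hLhead
      simpa using hz
  · -- last
    show L.get (Fin.cast hlen (Fin.last n')) = 1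
    have hgl : L.getLast hLne = (1 : I) := by
      have h2 := List.getLast?_eq_getLast_of_ne_nil hLne
      rw [hLlast] at h2
      have h3 : P.t ⟨P.n, Nat.lt_succ_self _⟩ = L.getLast hLne := by
        exact Option.some_injective _ h2
      rw [← h3]
      have : (⟨P.n, Nat.lt_succ_self _⟩ : Fin (P.n+1)) = Fin.last P.n := rfl
      rw [this, P.last]
    rw [List.getLast_eq_getElem] at hgl
    simp only [List.get_eq_getElem]
    exact hgl
  · -- refinement
    intro i
    have hiL : P.t i ∈ L := by
      have h4 := hLmem i.1 (Nat.lt_succ_iff.1 i.2)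
      simpa [Fin.eta] using h4
    obtain ⟨j, hj⟩ := List.mem_iff_get.1 hiL
    refine ⟨Fin.cast hlen.symm j, ?_⟩
    show L.get (Fin.cast hlen (Fin.cast hlen.symm j)) = P.t i
    exact hj
  · -- property
    intro j
    have h5 := List.isChain_iff_getElem.1 hL j.1 (by have : (j:ℕ) < n' := j.2; omega)
    exact h5.2
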